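/- If (A, B, C) ∈ U, then B = Cl⁻(C); that is, B consists exactly of the companions of elements of C. -/
import Mathlib


open Classical Set

noncomputable section

/-- γ(n) = 3n+1 if n ≡ 0 or 2 (mod 3), else n. -/
def gam (n : ℕ) : ℕ := if n % 3 = 0 ∨ n % 3 = 2 then 3 * n + 1 else n

/-- R(x,y) ⟺ x = γ(y) ∨ y = γ(x). -/
def Rrel (x y : ℕ) : Prop := x = gam y ∨ y = gam x

/-- X closed under R. -/
def RClosed (X : Set ℕ) : Prop := ∀ x ∈ X, ∀ y, Rrel x y → y ∈ X

/-- Cl(X): the least R-closed superset of X. -/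
def Cl (X : Set ℕ) : Set ℕ := ⋂₀ {Y | X ⊆ Y ∧ RClosed Y}

/-- Cl⁻(X) = Cl(X) \ X. -/
def Clm (X : Set ℕ) : Set ℕ := Cl X \ X

/-- The companion ñ: the element ≠ n of Cl({n}) if one exists, else n. -/
def companion (n : ℕ) : ℕ :=
  if h : ∃ y, y ≠ n ∧ y ∈ Cl {n} then h.choose else n

def N0 : Set ℕ := {n | gam n = n}

def T0 : Set ℕ := {n | n % 3 = 0}
def T1 : Set ℕ := {n | n % 3 = 1}
def T2 : Set ℕ := {n | n % 3 = 2}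
def T02 : Set ℕ := T0 ∪ T2

def v1 : Set ℕ := (Cl T2)ᶜ
def v2 : Set ℕ := Clm T2
def v3 : Set ℕ := T2

/-- (A,B,C) is a partition of ℕ into three pairwise disjoint sets. -/
def IsPartition3 (A B C : Set ℕ) : Prop :=
  A ∪ B ∪ C = Set.univ ∧ Disjoint A B ∧ Disjoint A C ∧ Disjoint B C

/-- Membership in U: partition with v ⊴ (A,B,C), A closed, B ⊆ v₂. -/
def memU (A B C : Set ℕ) : Prop :=
  IsPartition3 A B C ∧ v1 ⊆ A ∧ C ⊆ v3 ∧ RClosed A ∧ B ⊆ v2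

lemma subset_Cl (X : Set ℕ) : X ⊆ Cl X := fun x hx Y hY => hY.1 hx

lemma RClosed_Cl (X : Set ℕ) : RClosed (Cl X) := by
  intro x hx y hxy Y hY
  exact hY.2 x (hx Y hY) y hxy

lemma Cl_min {X Y : Set ℕ} (h1 : X ⊆ Y) (h2 : RClosed Y) : Cl X ⊆ Y :=
  fun x hx => hx Y ⟨h1, h2⟩

lemma gam_two {n : ℕ} (h : n % 3 = 2) : gam n = 3 * n + 1 := by
  unfold gam; rw [if_pos (Or.inr h)]

lemma gam_one {n : ℕ} (h : n % 3 = 1) : gam n = n := by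
  unfold gam; rw [if_neg (by omega)]

/-- If C ⊆ T2, then Cl C = C ∪ {3n+1 : n ∈ C}. -/
lemma Cl_of_sub_two {C : Set ℕ} (hC : ∀ n ∈ C, n % 3 = 2) :
    Cl C = C ∪ {x | ∃ n ∈ C, x = 3 * n + 1} := by
  apply Set.Subset.antisymm
  · apply Cl_min Set.subset_union_left
    intro x hx y hxy
    rcases hx with hx | ⟨n, hn, rfl⟩
    · have h2 := hC x hx
      rcases hxy with h | h
      · by_cases hy : y % 3 = 0 ∨ y % 3 = 2
        · exfalso; unfold gam at h; rw [if_pos hy] at h; omega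
        · unfold gam at h; rw [if_neg hy] at h; subst h; exact Or.inl hx
      · rw [gam_two h2] at h; exact Or.inr ⟨x, hx, h⟩
    · have h2 := hC n hn
      have h1 : (3 * n + 1) % 3 = 1 := by omega
      rcases hxy with h | h
      · by_cases hy : y % 3 = 0 ∨ y % 3 = 2
        · unfold gam at h; rw [if_pos hy] at h
          have : y = n := by omega
          exact Or.inl (this ▸ hn)
        · unfold gam at h; rw [if_neg hy] at h; subst h; exact Or.inr ⟨n, hn, rfl⟩
      · rw [gam_one h1] at h; subst h; exact Or.inr ⟨n, hn, rfl⟩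
  · intro x hx
    rcases hx with hx | ⟨n, hn, rfl⟩
    · exact subset_Cl C hx
    · exact RClosed_Cl C n (subset_Cl C hn) _ (Or.inr (gam_two (hC n hn)).symm)

theorem second_eq_clm_third (A B C : Set ℕ) (h : memU A B C) : B = Clm C := by
  obtain ⟨⟨hpart, hAB, hAC, hBC⟩, hv1, hCT2, hAcl, hBv2⟩ := h
  have hC2 : ∀ n ∈ C, n % 3 = 2 := hCT2
  have hT22 : ∀ n ∈ T2, n % 3 = 2 := fun n hn => hn
  have hClC := Cl_of_sub_two hC2
  have hClT2 := Cl_of_sub_two hT22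
  ext x
  constructor
  · intro hx
    have hxm : x ∈ Clm T2 := hBv2 hx
    obtain ⟨hxCl, hxT2⟩ := hxm
    rw [hClT2] at hxCl
    rcases hxCl with hx2 | ⟨n, hn, rfl⟩
    · exact absurd hx2 hxT2
    · -- x = 3n+1, n % 3 = 2; show n ∈ C
      have hn2 : n % 3 = 2 := hn
      have hnC : n ∈ C := by
        have : n ∈ A ∪ B ∪ C := hpart ▸ Set.mem_univ n
        rcases this with (hnA | hnB) | hnC
        · exfalso
          have : (3 * n + 1) ∈ A :=
            hAcl n hnA _ (Or.inr (gam_two hn2).symm)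
          exact Set.disjoint_left.mp hAB this hx
        · exfalso
          have := (hBv2 hnB).2
          exact this hn2
        · exact hnC
      constructor
      · rw [hClC]; exact Or.inr ⟨n, hnC, rfl⟩
      · intro hmem; have := hC2 _ hmem; omega
  · rintro ⟨hxCl, hxC⟩
    rw [hClC] at hxCl
    rcases hxCl with hx2 | ⟨n, hn, rfl⟩
    · exact absurd hx2 hxC
    · have hn2 : n % 3 = 2 := hC2 n hn
      have : (3 * n + 1) ∈ A ∪ B ∪ C := hpart ▸ Set.mem_univ _
      rcases this with (hA | hB) | hC'
      · exfalso
        have : n ∈ A := hAcl _ hA n (Or.inl (gam_two hn2).symm)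
        exact Set.disjoint_left.mp hAC this hn
      · exact hB
      · exact absurd hC' hxC
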